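/- Let C be a d × d matrix with unit diagonal and f an orthonormal basis of ℂ^d unbiased with respect to the canonical basis. Then Tr[|conj(C)⟩⟨conj(C)| ∘ Z_f] = (1/d) Σ_{i,j=1}^d |C_{ij}|². -/

import Mathlib

open Matrix BigOperators ComplexOrder

noncomputable section

/-- The matrix `Z_f = ∑ k |f_k ⊗ conj(f_k)⟩⟨f_k ⊗ conj(f_k)|` on `ℂ^d ⊗ ℂ^d`. -/
def ZMat {d : ℕ} (f : Fin d → Fin d → ℂ) :
    Matrix (Fin d × Fin d) (Fin d × Fin d) ℂ :=
  Matrix.of fun p q =>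
    ∑ i, (f i p.1 * star (f i p.2)) * star (f i q.1 * star (f i q.2))

/-- `f` is an orthonormal family (hence basis) of `ℂ^d`. -/
def OrthonormalBasis' {d : ℕ} (f : Fin d → Fin d → ℂ) : Prop :=
  ∀ i j, (∑ k, star (f i k) * f j k) = if i = j then 1 else 0

/-- Rank-one projector `|v⟩⟨v|` for a vector on the doubled index set. -/
def outerP {d : ℕ} (v : Fin d × Fin d → ℂ) :
    Matrix (Fin d × Fin d) (Fin d × Fin d) ℂ :=
  Matrix.of fun p q => v p * star (v q)

/-- Vectorization of the entrywise conjugate of a matrix. -/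
def vecConj {d : ℕ} (C : Matrix (Fin d) (Fin d) ℂ) : Fin d × Fin d → ℂ :=
  fun p => star (C p.1 p.2)

theorem Schur_G_trace {d : ℕ} (hd : 0 < d) (C : Matrix (Fin d) (Fin d) ℂ)
    (hCdiag : ∀ i, C i i = 1)
    (f : Fin d → Fin d → ℂ) (hf : OrthonormalBasis' f)
    (hunb : ∀ k s, ‖f k s‖ = 1 / Real.sqrt d) :
    (Matrix.hadamard (outerP (vecConj C)) (ZMat f)).trace
      = (((∑ i, ∑ j, ‖C i j‖ ^ 2) / d : ℝ) : ℂ) := by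
  have hd' : (d : ℂ) ≠ 0 := Nat.cast_ne_zero.mpr hd.ne'
  have habs2 : ∀ k s, f k s * star (f k s) = (1 / d : ℂ) := by
    intro k s
    have h2 : Complex.normSq (f k s) = 1 / d := by
      rw [← Complex.sq_norm, hunb k s, div_pow, one_pow,
        Real.sq_sqrt (Nat.cast_nonneg d)]
    rw [show star (f k s) = (starRingEnd ℂ) (f k s) from rfl, Complex.mul_conj, h2]
    push_cast
    ring
  have hZ : ∀ p : Fin d × Fin d, ZMat f p p = (1 / d : ℂ) := by
    intro p
    have : ∀ i : Fin d,
        (f i p.1 * star (f i p.2)) * star (f i p.1 * star (f i p.2))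
          = (1 / d : ℂ) * (1 / d : ℂ) := by
      intro i
      have := habs2 i p.1
      have := habs2 i p.2
      calc (f i p.1 * star (f i p.2)) * star (f i p.1 * star (f i p.2))
          = (f i p.1 * star (f i p.1)) * (f i p.2 * star (f i p.2)) := by
            simp only [StarMul.star_mul, star_star]; ring
        _ = (1 / d : ℂ) * (1 / d : ℂ) := by rw [habs2 i p.1, habs2 i p.2]
    simp only [ZMat, Matrix.of_apply, this, Finset.sum_const, Finset.card_univ,
      Fintype.card_fin, nsmul_eq_mul]
    field_simp
  have hO : ∀ p : Fin d × Fin d,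
      outerP (vecConj C) p p = ((‖C p.1 p.2‖ ^ 2 : ℝ) : ℂ) := by
    intro p
    simp only [outerP, vecConj, Matrix.of_apply, star_star]
    rw [show star (C p.1 p.2) = (starRingEnd ℂ) (C p.1 p.2) from rfl,
      mul_comm, Complex.mul_conj, Complex.sq_norm]
  rw [Matrix.trace]
  simp only [Matrix.diag, Matrix.hadamard_apply, hZ, hO]
  rw [Fintype.sum_prod_type]
  push_cast
  simp_rw [mul_one_div, Finset.sum_div]
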